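/- The free group of countably infinite rank is bi-orderable: the Magnus ordering, defined by comparing the lexicographically smallest differing terms (with respect to a shortlex order on monomials induced by a total order on the variables) of the Magnus expansions of group elements, is a total order on F_∞ invariant under left and right multiplication. -/

import Mathlib

open Classical in
/-- The ring of formal power series over `ℤ` in non-commuting variables indexed by `X`:
coefficient functions on the free monoid of monomials, with convolution product. -/
def NCSeries (X : Type*) : Type _ := FreeMonoid X → ℤ

namespace NCSeries

variable {X : Type*}

instance : AddCommGroup (NCSeries X) := inferInstanceAs (AddCommGroup (FreeMonoid X → ℤ))

open Classical in
noncomputable instance : One (NCSeries X) := ⟨fun w => if w = 1 then 1 else 0⟩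

instance : Mul (NCSeries X) :=
  ⟨fun f g w => ∑ i ∈ Finset.range ((FreeMonoid.toList w).length + 1),
    f (FreeMonoid.ofList ((FreeMonoid.toList w).take i)) *
      g (FreeMonoid.ofList ((FreeMonoid.toList w).drop i))⟩

theorem mul_apply (f g : NCSeries X) (w : FreeMonoid X) :
    (f * g) w = ∑ i ∈ Finset.range ((FreeMonoid.toList w).length + 1),
      f (FreeMonoid.ofList ((FreeMonoid.toList w).take i)) *
        g (FreeMonoid.ofList ((FreeMonoid.toList w).drop i)) := rfl

open Classical in
theorem one_apply (w : FreeMonoid X) : (1 : NCSeries X) w = if w = 1 then 1 else 0 := rfl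

theorem add_apply (f g : NCSeries X) (w : FreeMonoid X) : (f + g) w = f w + g w := rfl

theorem zero_apply (w : FreeMonoid X) : (0 : NCSeries X) w = 0 := rfl

theorem ofList_eq_one_iff (l : List X) : FreeMonoid.ofList l = 1 ↔ l = [] := by
  constructor
  · intro h; simpa using congrArg FreeMonoid.toList h
  · rintro rfl; rfl

noncomputable instance : Ring (NCSeries X) where
  __ := (inferInstance : AddCommGroup (NCSeries X))
  one_mul f := by
    funext w
    rw [mul_apply, Finset.sum_eq_single 0]
    · simp [one_apply, ofList_eq_one_iff]
    · intro b hb hb0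
      have : ¬ ((FreeMonoid.toList w).take b = []) := by
        rw [List.take_eq_nil_iff]
        rw [Finset.mem_range] at hb
        rintro (rfl | hnil)
        · exact hb0 rfl
        · simp [hnil] at hb; omega
      rw [one_apply, if_neg, zero_mul]
      rw [ofList_eq_one_iff]; exact this
    · intro h0; exact absurd (Finset.mem_range.2 (Nat.succ_pos _)) h0
  mul_one f := by
    funext w
    rw [mul_apply, Finset.sum_eq_single ((FreeMonoid.toList w).length)]
    · simp [one_apply, ofList_eq_one_iff]
    · intro b hb hb'
      rw [Finset.mem_range] at hb
      rw [one_apply, if_neg, mul_zero]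
      rw [ofList_eq_one_iff, List.drop_eq_nil_iff]
      omega
    · intro h0; exact absurd (Finset.mem_range.2 (Nat.lt_succ_self _)) h0
  mul_assoc f g h := by
    funext w
    set l := FreeMonoid.toList w with hl
    have key : ∀ j ∈ Finset.range (l.length + 1),
        (f * g) (FreeMonoid.ofList (l.take j)) * h (FreeMonoid.ofList (l.drop j)) =
        ∑ i ∈ Finset.range (j + 1),
          f (FreeMonoid.ofList (l.take i)) *
            g (FreeMonoid.ofList ((l.drop i).take (j - i))) *
            h (FreeMonoid.ofList (l.drop j)) := by
      intro j hj
      rw [Finset.mem_range] at hj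
      rw [mul_apply, Finset.sum_mul]
      simp only [FreeMonoid.toList_ofList]
      rw [List.length_take, min_eq_left (by omega)]
      refine Finset.sum_congr rfl fun i hi => ?_
      rw [Finset.mem_range] at hi
      rw [List.take_take, min_eq_left (by omega), List.drop_take]
    have key2 : ∀ i ∈ Finset.range (l.length + 1),
        f (FreeMonoid.ofList (l.take i)) * (g * h) (FreeMonoid.ofList (l.drop i)) =
        ∑ k ∈ Finset.range ((l.length - i) + 1),
          f (FreeMonoid.ofList (l.take i)) *
            (g (FreeMonoid.ofList ((l.drop i).take k)) *
              h (FreeMonoid.ofList (l.drop (i + k)))) := by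
      intro i hi
      rw [Finset.mem_range] at hi
      rw [mul_apply, Finset.mul_sum]
      simp only [FreeMonoid.toList_ofList]
      rw [List.length_drop]
      refine Finset.sum_congr rfl fun k hk => ?_
      rw [List.drop_drop]
    show (f * g * h) w = (f * (g * h)) w
    rw [mul_apply, Finset.sum_congr rfl key, Finset.sum_sigma']
    rw [mul_apply, Finset.sum_congr rfl key2, Finset.sum_sigma']
    refine Finset.sum_nbij' (fun p => ⟨p.2, p.1 - p.2⟩) (fun p => ⟨p.1 + p.2, p.1⟩)
      ?_ ?_ ?_ ?_ ?_
    · rintro ⟨j, i⟩ hp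
      simp only [Finset.mem_sigma, Finset.mem_range] at hp ⊢
      omega
    · rintro ⟨i, k⟩ hp
      simp only [Finset.mem_sigma, Finset.mem_range] at hp ⊢
      omega
    · rintro ⟨j, i⟩ hp
      simp only [Finset.mem_sigma, Finset.mem_range] at hp
      simp only [Sigma.mk.inj_iff, heq_eq_eq]
      exact ⟨by omega, trivial⟩
    · rintro ⟨i, k⟩ hp
      simp only [Finset.mem_sigma, Finset.mem_range] at hp
      simp only [Sigma.mk.inj_iff, heq_eq_eq]
      refine ⟨by trivial, by omega⟩
    · rintro ⟨j, i⟩ hp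
      simp only [Finset.mem_sigma, Finset.mem_range] at hp
      have hij : i + (j - i) = j := by omega
      rw [hij, mul_assoc]
  left_distrib f g h := by
    funext w
    simp only [mul_apply, add_apply, mul_add, Finset.sum_add_distrib]
  right_distrib f g h := by
    funext w
    simp only [mul_apply, add_apply, add_mul, Finset.sum_add_distrib]
  zero_mul f := by funext w; simp [mul_apply, zero_apply]
  mul_zero f := by funext w; simp [mul_apply, zero_apply]

open Classical in
/-- The variable `X_x` as a power series. -/
noncomputable def Xvar (x : X) : NCSeries X :=
  fun w => if w = FreeMonoid.of x then 1 else 0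

end NCSeries

/-- The shortlex order on monomials (elements of the free monoid) induced by an order `r`
on the variables: compare lengths first, then lexicographically. -/
def shortlex {X : Type*} (r : X → X → Prop) (u v : FreeMonoid X) : Prop :=
  (FreeMonoid.toList u).length < (FreeMonoid.toList v).length ∨
    ((FreeMonoid.toList u).length = (FreeMonoid.toList v).length ∧
      List.Lex r (FreeMonoid.toList u) (FreeMonoid.toList v))

/-- The Magnus ordering on the free group, relative to a variable order `r` and the
Magnus expansion `f`: `a ≺ b` iff at the shortlex-smallest monomial where the Magnus
expansions of `a` and `b` differ, the coefficient of `a` is smaller. -/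
def magnusLt {X : Type*} (r : X → X → Prop) (f : FreeGroup X →* (NCSeries X)ˣ)
    (a b : FreeGroup X) : Prop :=
  ∃ m : FreeMonoid X,
    ((f a : (NCSeries X)ˣ) : NCSeries X) m < ((f b : (NCSeries X)ˣ) : NCSeries X) m ∧
    ∀ m' : FreeMonoid X, shortlex r m' m →
      ((f a : (NCSeries X)ˣ) : NCSeries X) m' = ((f b : (NCSeries X)ˣ) : NCSeries X) m'


/-! ### Auxiliary development for the Magnus ordering -/

section MagnusAux

open FreeMonoid List NCSeries

/-- The geometric series `1 - X_n + X_n^2 - ...`, inverse of `1 + X_n`. -/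
noncomputable def geomS (n : ℕ) : NCSeries ℕ :=
  fun w => if FreeMonoid.toList w = List.replicate (FreeMonoid.toList w).length n
    then (-1) ^ (FreeMonoid.toList w).length else 0

lemma ofList_nil_eq_one : (FreeMonoid.ofList ([] : List ℕ)) = 1 :=
  (NCSeries.ofList_eq_one_iff []).2 rfl

lemma mul_apply_ofList (f g : NCSeries ℕ) (l : List ℕ) :
    (f * g) (FreeMonoid.ofList l) = ∑ i ∈ Finset.range (l.length + 1),
      f (FreeMonoid.ofList (l.take i)) * g (FreeMonoid.ofList (l.drop i)) := by
  rw [NCSeries.mul_apply]; simp [FreeMonoid.toList_ofList]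

lemma one_apply_ofList (l : List ℕ) :
    (1 : NCSeries ℕ) (FreeMonoid.ofList l) = if l = [] then 1 else 0 := by
  rw [NCSeries.one_apply]
  by_cases h : l = [] <;> simp [h, NCSeries.ofList_eq_one_iff]

lemma onePlusX_apply (n : ℕ) (l : List ℕ) :
    (1 + NCSeries.Xvar n) (FreeMonoid.ofList l)
      = (if l = [] then 1 else 0) + (if l = [n] then 1 else 0) := by
  have h2 : (FreeMonoid.ofList l = FreeMonoid.of n) ↔ l = [n] := by
    constructor
    · intro h
      have := congrArg FreeMonoid.toList h
      simpa [FreeMonoid.toList_ofList, FreeMonoid.toList_of] using this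
    · rintro rfl; exact FreeMonoid.ofList_singleton n
  rw [NCSeries.add_apply, one_apply_ofList]
  congr 1
  unfold NCSeries.Xvar
  split_ifs with ha hb
  · rfl
  · exact absurd (h2.1 ha) hb
  · exact absurd (h2.2 (by assumption)) ha
  · rfl

lemma geomS_apply (n : ℕ) (l : List ℕ) :
    geomS n (FreeMonoid.ofList l)
      = if l = List.replicate l.length n then (-1) ^ l.length else 0 := by
  simp [geomS, FreeMonoid.toList_ofList]
  congr

/-- The series attached to a single letter of a word in the free group. -/
noncomputable def letterS : ℕ × Bool → NCSeries ℕ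
  | (n, true) => 1 + NCSeries.Xvar n
  | (n, false) => geomS n

/-- The Magnus expansion of a word, at the level of series. -/
noncomputable def prodS (L : List (ℕ × Bool)) : NCSeries ℕ := (L.map letterS).prod

lemma prodS_nil : prodS [] = 1 := by simp [prodS]

lemma prodS_cons (x : ℕ × Bool) (L : List (ℕ × Bool)) :
    prodS (x :: L) = letterS x * prodS L := by simp [prodS]

lemma prodS_append (L₁ L₂ : List (ℕ × Bool)) :
    prodS (L₁ ++ L₂) = prodS L₁ * prodS L₂ := by simp [prodS]

lemma sum_head_two (g : ℕ → ℤ) (N : ℕ) (h : ∀ i, 2 ≤ i → i ≤ N + 1 → g i = 0) :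
    ∑ i ∈ Finset.range (N + 2), g i = g 0 + g 1 := by
  induction N with
  | zero => rw [Finset.sum_range_succ, Finset.sum_range_one]
  | succ n ih =>
      rw [Finset.sum_range_succ, ih (fun i h2 hle => h i h2 (by omega)),
        h (n + 2) (by omega) (by omega), add_zero]

lemma onePlusX_mul_geomS (n : ℕ) : (1 + NCSeries.Xvar n) * geomS n = 1 := by
  funext w
  rw [← FreeMonoid.ofList_toList w]
  generalize FreeMonoid.toList w = l
  rw [mul_apply_ofList, one_apply_ofList]
  cases l with
  | nil =>
      rw [show ([] : List ℕ).length + 1 = 1 from rfl, Finset.sum_range_one, List.take_nil,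
        List.drop_nil, onePlusX_apply, geomS_apply]
      simp
  | cons x t =>
      have hterm : ∀ i, 2 ≤ i → i ≤ (x :: t).length →
          (1 + NCSeries.Xvar n) (FreeMonoid.ofList ((x :: t).take i)) *
            geomS n (FreeMonoid.ofList ((x :: t).drop i)) = 0 := by
        intro i h2 hle
        have hlen : ((x :: t).take i).length = i := by
          rw [List.length_take]; omega
        rw [onePlusX_apply, if_neg, if_neg, add_zero, zero_mul]
        · intro h; rw [h] at hlen; simp at hlen; omega
        · intro h; rw [h] at hlen; simp at hlen; omega
      have hlist : (x :: t).length + 1 = t.length + 2 := by simp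
      rw [hlist, sum_head_two _ t.length (by
        intro i h2 hle
        exact hterm i h2 (by simpa using hle))]
      have e0 : (1 + NCSeries.Xvar n) (FreeMonoid.ofList ((x :: t).take 0)) = 1 := by
        rw [List.take_zero, onePlusX_apply]; simp
      have e1 : (1 + NCSeries.Xvar n) (FreeMonoid.ofList ((x :: t).take 1)) =
          if x = n then 1 else 0 := by
        rw [show (x :: t).take 1 = [x] from rfl, onePlusX_apply]
        simp
      rw [e0, e1, one_mul, List.drop_zero, show (x :: t).drop 1 = t from rfl,
        if_neg (by simp : ¬(x :: t = []))]
      by_cases hx : x = n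
      · subst hx
        rw [if_pos rfl, one_mul, geomS_apply, geomS_apply]
        by_cases ht : t = List.replicate t.length x
        · rw [if_pos (by rw [List.length_cons, List.replicate_succ]; exact congrArg (x :: ·) ht),
            if_pos ht, List.length_cons, pow_succ]
          ring
        · rw [if_neg (fun h => ht (by
              rw [List.length_cons, List.replicate_succ] at h
              exact (List.cons_eq_cons.mp h).2)), if_neg ht]
          ring
      · rw [if_neg hx, zero_mul, geomS_apply, if_neg (fun h => hx (by
            rw [List.length_cons, List.replicate_succ] at h
            exact (List.cons_eq_cons.mp h).1))]
        ring

section withF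
variable (f : FreeGroup ℕ →* (NCSeries ℕ)ˣ)
  (hf : ∀ n : ℕ, ((f (FreeGroup.of n) : (NCSeries ℕ)ˣ) : NCSeries ℕ) = 1 + NCSeries.Xvar n)

include hf

lemma val_inv_of (n : ℕ) : (((f (FreeGroup.of n))⁻¹ : (NCSeries ℕ)ˣ) : NCSeries ℕ) = geomS n := by
  have h1 : ((f (FreeGroup.of n) : (NCSeries ℕ)ˣ) : NCSeries ℕ) * geomS n = 1 := by
    rw [hf n]; exact onePlusX_mul_geomS n
  calc (((f (FreeGroup.of n))⁻¹ : (NCSeries ℕ)ˣ) : NCSeries ℕ)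
      = (((f (FreeGroup.of n))⁻¹ : (NCSeries ℕ)ˣ) : NCSeries ℕ) *
        (((f (FreeGroup.of n) : (NCSeries ℕ)ˣ) : NCSeries ℕ) * geomS n) := by rw [h1, mul_one]
    _ = ((((f (FreeGroup.of n))⁻¹ * f (FreeGroup.of n) : (NCSeries ℕ)ˣ)) : NCSeries ℕ) * geomS n := by
        rw [Units.val_mul, mul_assoc]
    _ = geomS n := by rw [inv_mul_cancel]; simp

lemma val_mk (L : List (ℕ × Bool)) :
    ((f (FreeGroup.mk L) : (NCSeries ℕ)ˣ) : NCSeries ℕ) = prodS L := by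
  induction L with
  | nil =>
      rw [← FreeGroup.one_eq_mk, map_one, prodS_nil, Units.val_one]
  | cons x L ih =>
      obtain ⟨n, b⟩ := x
      have hsplit : FreeGroup.mk ((n, b) :: L) = FreeGroup.mk [(n, b)] * FreeGroup.mk L := by
        rw [FreeGroup.mul_mk]; rfl
      rw [hsplit, map_mul, Units.val_mul, ih, prodS_cons]
      congr 1
      cases b with
      | true =>
          have : FreeGroup.mk [(n, true)] = FreeGroup.of n := rfl
          rw [this, hf n]; rfl
      | false =>
          have : FreeGroup.mk [(n, false)] = (FreeGroup.of n)⁻¹ := by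
            have : ((FreeGroup.of n : FreeGroup ℕ))⁻¹ = FreeGroup.mk (FreeGroup.invRev [(n, true)]) :=
              FreeGroup.inv_mk
            rw [this]; rfl
          rw [this, map_inv, val_inv_of f hf n]; rfl

end withF

lemma letterS_support {n : ℕ} {b : Bool} {l : List ℕ}
    (h : letterS (n, b) (FreeMonoid.ofList l) ≠ 0) : ∀ x ∈ l, x = n := by
  cases b with
  | true =>
      rw [show letterS (n, true) = 1 + NCSeries.Xvar n from rfl, onePlusX_apply] at h
      by_cases h0 : l = []
      · subst h0; simp
      · by_cases h1 : l = [n]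
        · subst h1; simp
        · simp [h0, h1] at h
  | false =>
      rw [show letterS (n, false) = geomS n from rfl, geomS_apply] at h
      by_cases hl : l = List.replicate l.length n
      · intro x hx; rw [hl] at hx; exact (List.mem_replicate.1 hx).2
      · simp [hl] at h

lemma prodS_run_support {n : ℕ} {b : Bool} :
    ∀ (t : ℕ) (l : List ℕ), prodS (List.replicate t (n, b)) (FreeMonoid.ofList l) ≠ 0 →
      ∀ x ∈ l, x = n := by
  intro t
  induction t with
  | zero =>
      intro l h x hx
      rw [show List.replicate 0 (n,b) = [] from rfl, prodS_nil, one_apply_ofList] at h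
      rcases eq_or_ne l [] with rfl | hne
      · simp at hx
      · simp [hne] at h
  | succ t ih =>
      intro l h x hx
      rw [List.replicate_succ, prodS_cons, mul_apply_ofList] at h
      obtain ⟨i, hi, hterm⟩ := Finset.exists_ne_zero_of_sum_ne_zero h
      have h1 : letterS (n, b) (FreeMonoid.ofList (l.take i)) ≠ 0 := fun hz => hterm (by rw [hz, zero_mul])
      have h2 : prodS (List.replicate t (n, b)) (FreeMonoid.ofList (l.drop i)) ≠ 0 :=
        fun hz => hterm (by rw [hz, mul_zero])
      have := List.take_append_drop i l
      rw [← this] at hx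
      rcases List.mem_append.1 hx with hx | hx
      · exact letterS_support h1 x hx
      · exact ih _ h2 x hx

lemma letterS_true_repl (n m : ℕ) :
    letterS (n, true) (FreeMonoid.ofList (List.replicate m n)) = if m ≤ 1 then 1 else 0 := by
  rw [show letterS (n, true) = 1 + NCSeries.Xvar n from rfl, onePlusX_apply]
  match m with
  | 0 => simp
  | 1 => simp
  | (m+2) =>
      rw [if_neg (by simp [List.replicate_succ]), if_neg, if_neg (by omega)]
      · simp
      · intro h
        have := congrArg List.length h
        simp at this

lemma letterS_false_repl (n m : ℕ) :
    letterS (n, false) (FreeMonoid.ofList (List.replicate m n)) = (-1) ^ m := by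
  rw [show letterS (n, false) = geomS n from rfl, geomS_apply]
  simp

lemma prodS_true_repl (n : ℕ) : ∀ (t m : ℕ),
    prodS (List.replicate t (n, true)) (FreeMonoid.ofList (List.replicate m n))
      = (t.choose m : ℤ) := by
  intro t
  induction t with
  | zero =>
      intro m
      rw [show List.replicate 0 (n,true) = [] from rfl, prodS_nil, one_apply_ofList]
      match m with
      | 0 => simp
      | (m+1) => simp [List.replicate_succ, Nat.choose_eq_zero_of_lt]
  | succ t ih =>
      intro m
      rw [List.replicate_succ, prodS_cons, mul_apply_ofList, List.length_replicate]
      have hterm : ∀ i ∈ Finset.range (m + 1),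
          letterS (n, true) (FreeMonoid.ofList ((List.replicate m n).take i)) *
            prodS (List.replicate t (n, true)) (FreeMonoid.ofList ((List.replicate m n).drop i))
          = (if i ≤ 1 then 1 else 0) * (t.choose (m - i) : ℤ) := by
        intro i hi
        rw [Finset.mem_range] at hi
        rw [List.take_replicate, List.drop_replicate, min_eq_left (by omega),
          letterS_true_repl, ih]
      rw [Finset.sum_congr rfl hterm]
      match m with
      | 0 => rw [Finset.sum_range_one]; norm_num
      | (m+1) =>
          rw [show m + 1 + 1 = m + 2 from rfl, sum_head_two _ m (by
            intro i h2 hle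
            rw [if_neg (by omega), zero_mul])]
          rw [if_pos (by omega), if_pos (by omega), one_mul, one_mul]
          simp only [Nat.sub_zero, Nat.add_sub_cancel]
          rw [Nat.choose_succ_succ t m]
          push_cast
          ring

lemma prodS_false_repl_pos (n : ℕ) : ∀ (t : ℕ), 1 ≤ t → ∀ (m : ℕ),
    0 < (-1 : ℤ) ^ m *
      prodS (List.replicate t (n, false)) (FreeMonoid.ofList (List.replicate m n)) := by
  intro t
  induction t with
  | zero => omega
  | succ t ih =>
      intro _ m
      rcases Nat.eq_zero_or_pos t with rfl | ht
      · rw [show List.replicate 1 (n, false) = [(n,false)] from rfl, prodS_cons, prodS_nil,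
          mul_one, letterS_false_repl]
        rw [← pow_add, show ((-1:ℤ))^(m+m) = 1 from Even.neg_one_pow ⟨m, rfl⟩]
        norm_num
      · rw [List.replicate_succ, prodS_cons, mul_apply_ofList, List.length_replicate]
        rw [Finset.mul_sum]
        apply Finset.sum_pos
        · intro i hi
          rw [Finset.mem_range] at hi
          rw [List.take_replicate, List.drop_replicate, min_eq_left (by omega),
            letterS_false_repl]
          have key := ih ht (m - i)
          have hsplit : (-1 : ℤ) ^ m = (-1) ^ (m - i) * (-1) ^ i := by
            rw [← pow_add]
            congr 1
            omega
          rw [hsplit]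
          calc (0:ℤ) < ((-1) ^ (m - i) *
              prodS (List.replicate t (n, false)) (FreeMonoid.ofList (List.replicate (m-i) n)))
                * ((-1) ^ i * (-1) ^ i) := by
                apply mul_pos key
                rw [← pow_add, show ((-1:ℤ))^(i+i) = 1 from Even.neg_one_pow ⟨i, rfl⟩]
                norm_num
            _ = (-1) ^ (m - i) * (-1) ^ i *
                ((-1) ^ i * prodS (List.replicate t (n, false))
                  (FreeMonoid.ofList (List.replicate (m-i) n))) := by ring
        · exact ⟨0, Finset.mem_range.2 (by omega)⟩

lemma prodS_run_top_ne (n : ℕ) (b : Bool) (t : ℕ) :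
    prodS (List.replicate t (n, b)) (FreeMonoid.ofList (List.replicate t n)) ≠ 0 := by
  cases b with
  | true => rw [prodS_true_repl]; simp
  | false =>
      rcases Nat.eq_zero_or_pos t with rfl | ht
      · rw [show List.replicate 0 ((n:ℕ),false) = [] from rfl, prodS_nil]
        rw [show List.replicate 0 (n:ℕ) = [] from rfl, one_apply_ofList]
        simp
      · have := prodS_false_repl_pos n t ht t
        intro hz
        rw [hz, mul_zero] at this
        exact lt_irrefl _ this

/-- A word is reduced iff adjacent letters with the same generator have the same sign. -/
def RedWord (L : List (ℕ × Bool)) : Prop :=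
  List.Chain' (fun a b => a.1 = b.1 → a.2 = b.2) L

lemma redWord_of_no_cancel :
    ∀ (L : List (ℕ × Bool)),
      (∀ (L₂ : List (ℕ × Bool)) (x : ℕ) (b : Bool) (L₃ : List (ℕ × Bool)),
        L ≠ L₂ ++ (x, b) :: (x, !b) :: L₃) → RedWord L := by
  intro L
  induction L with
  | nil => intro _; exact List.isChain_nil
  | cons a T ih =>
      intro h
      cases T with
      | nil => exact List.isChain_singleton a
      | cons c T' =>
          unfold RedWord List.Chain'
          rw [List.isChain_cons_cons]
          constructor
          · intro h1
            by_contra h2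
            refine h [] a.1 a.2 T' ?_
            have hc : c = (a.1, !a.2) := by
              obtain ⟨c1, c2⟩ := c
              obtain ⟨a1, a2⟩ := a
              simp at h1 h2 ⊢
              exact ⟨h1.symm, by
                cases a2 <;> cases c2 <;> simp_all⟩
            rw [hc]
            simp
          · apply ih
            intro L₂ x b L₃ heq
            exact h (a :: L₂) x b L₃ (by rw [heq]; rfl)

lemma redWord_toWord (w : FreeGroup ℕ) : RedWord w.toWord := by
  apply redWord_of_no_cancel
  intro L₂ x b L₃ heq
  have h1 : FreeGroup.reduce w.toWord = w.toWord := FreeGroup.reduce_toWord w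
  rw [heq] at h1
  exact FreeGroup.reduce.not h1

lemma run_decomp :
    ∀ (R : List (ℕ × Bool)) (a : ℕ) (e : Bool), RedWord ((a, e) :: R) →
      ∃ t L', (a, e) :: R = List.replicate (t + 1) (a, e) ++ L' ∧ RedWord L' ∧
        ∀ x ∈ L'.head?, x.1 ≠ a := by
  intro R
  induction R with
  | nil => intro a e _; exact ⟨0, [], rfl, List.isChain_nil, by simp⟩
  | cons y T ih =>
      intro a e hred
      unfold RedWord List.Chain' at hred
      rw [List.isChain_cons_cons] at hred
      by_cases hy : y = (a, e)
      · subst hy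
        obtain ⟨t, L', heq, h1, h2⟩ := ih a e hred.2
        exact ⟨t + 1, L', by rw [List.replicate_succ, List.cons_append, ← heq], h1, h2⟩
      · refine ⟨0, y :: T, rfl, hred.2, ?_⟩
        intro x hx
        simp only [List.head?_cons, Option.mem_some_iff] at hx
        subst hx
        intro hxa
        apply hy
        have h2 := hred.1 hxa.symm
        obtain ⟨y1, y2⟩ := y
        simp_all

lemma prodS_zero_of_prefix :
    ∀ (N : ℕ) (L : List (ℕ × Bool)) (p : List ℕ), L.length ≤ N → RedWord L → p ≠ [] →
      (∀ x ∈ L.head?, p.getLast? ≠ some x.1) →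
      prodS L (FreeMonoid.ofList (p ++ L.map Prod.fst)) = 0 := by
  intro N
  induction N with
  | zero =>
      intro L p hL _ hp _
      have : L = [] := by
        cases L with
        | nil => rfl
        | cons a T => simp at hL
      subst this
      rw [prodS_nil]
      rw [List.map_nil, List.append_nil]
      rw [one_apply_ofList, if_neg hp]
  | succ N ih =>
      intro L p hL hred hp hlast
      cases L with
      | nil =>
          rw [prodS_nil]
          rw [List.map_nil, List.append_nil]
          rw [one_apply_ofList, if_neg hp]
      | cons a R =>
          obtain ⟨a, e⟩ := a
          obtain ⟨t, L', hdecomp, hred', hhead'⟩ := run_decomp R a e hred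
          have hlenL : ((a, e) :: R).length = (t + 1) + L'.length := by
            rw [hdecomp, List.length_append, List.length_replicate]
          have hL' : L'.length ≤ N := by omega
          have hheadcond : p.getLast? ≠ some a := by
            have := hlast (a, e) (by simp)
            exact this
          rw [hdecomp, prodS_append, List.map_append, List.map_replicate]
          set l := p ++ (List.replicate (t + 1) a ++ L'.map Prod.fst) with hl
          rw [mul_apply_ofList]
          apply Finset.sum_eq_zero
          intro i hi
          rw [Finset.mem_range] at hi
          by_cases hu : prodS (List.replicate (t + 1) (a, e)) (FreeMonoid.ofList (l.take i)) = 0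
          · rw [hu, zero_mul]
          have hall : ∀ x ∈ l.take i, x = a := prodS_run_support (t + 1) _ hu
          have hip : i < p.length := by
            by_contra hip
            push_neg at hip
            have hpsub : ∀ x ∈ p, x ∈ l.take i := by
              intro x hx
              have h1 : p = List.take p.length (l.take i) := by
                rw [List.take_take, min_eq_left hip, hl, List.take_left]
              rw [h1] at hx
              exact List.take_subset _ _ hx
            have hlasta : p.getLast hp = a := hall _ (hpsub _ (List.getLast_mem hp))
            apply hheadcond
            rw [List.getLast?_eq_getLast hp, hlasta]
          have hdrop : l.drop i = ((p.drop i) ++ List.replicate (t + 1) a) ++ L'.map Prod.fst := by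
            rw [hl, List.drop_append_of_le_length (le_of_lt hip), List.append_assoc]
          rw [hdrop]
          have hz := ih L' ((p.drop i) ++ List.replicate (t + 1) a) hL' hred'
            (by simp)
            (by
              intro x hx
              rw [List.getLast?_append, List.getLast?_replicate]
              simp only [Nat.succ_ne_zero, if_neg (by omega : ¬(t + 1 = 0))]
              intro hcontra
              have : a = x.1 := by
                simpa using hcontra
              exact hhead' x hx this.symm)
          rw [hz, mul_zero]

lemma prodS_diag_ne_zero :
    ∀ (N : ℕ) (L : List (ℕ × Bool)), L.length ≤ N → RedWord L →
      prodS L (FreeMonoid.ofList (L.map Prod.fst)) ≠ 0 := by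
  intro N
  induction N with
  | zero =>
      intro L hL _
      have : L = [] := by
        cases L with
        | nil => rfl
        | cons a T => simp at hL
      subst this
      rw [prodS_nil]
      rw [List.map_nil]
      rw [one_apply_ofList, if_pos rfl]
      norm_num
  | succ N ih =>
      intro L hL hred
      cases L with
      | nil =>
          rw [prodS_nil]
          rw [List.map_nil]
          rw [one_apply_ofList, if_pos rfl]
          norm_num
      | cons a R =>
          obtain ⟨a, e⟩ := a
          obtain ⟨t, L', hdecomp, hred', hhead'⟩ := run_decomp R a e hred
          have hlenL : ((a, e) :: R).length = (t + 1) + L'.length := by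
            rw [hdecomp, List.length_append, List.length_replicate]
          have hL' : L'.length ≤ N := by omega
          rw [hdecomp, prodS_append, List.map_append, List.map_replicate]
          set l := List.replicate (t + 1) a ++ L'.map Prod.fst with hl
          have hllen : l.length = (t + 1) + L'.length := by
            rw [hl, List.length_append, List.length_replicate, List.length_map]
          rw [mul_apply_ofList]
          rw [Finset.sum_eq_single (t + 1)]
          · have htake : l.take (t + 1) = List.replicate (t + 1) a :=
              List.take_left' (by rw [List.length_replicate])
            have hdrop : l.drop (t + 1) = L'.map Prod.fst :=
              List.drop_left' (by rw [List.length_replicate])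
            rw [htake, hdrop]
            exact mul_ne_zero (prodS_run_top_ne a e (t + 1)) (ih L' hL' hred')
          · intro i hi hne
            rw [Finset.mem_range] at hi
            by_cases hu : prodS (List.replicate (t + 1) (a, e)) (FreeMonoid.ofList (l.take i)) = 0
            · rw [hu, zero_mul]
            have hall : ∀ x ∈ l.take i, x = a := prodS_run_support (t + 1) _ hu
            rcases Nat.lt_or_ge i (t + 1) with hlt | hge
            · -- i < t+1 : the remaining part starts with a nonempty run of a's
              have hdropl : l.drop i = List.replicate (t + 1 - i) a ++ L'.map Prod.fst := by
                rw [hl, List.drop_append_of_le_length (by rw [List.length_replicate]; omega),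
                  List.drop_replicate]
              rw [hdropl]
              rw [prodS_zero_of_prefix L'.length L' (List.replicate (t + 1 - i) a) le_rfl hred'
                (by
                  intro hcontra
                  have := congrArg List.length hcontra
                  rw [List.length_replicate] at this
                  simp at this
                  omega)
                (by
                  intro x hx
                  rw [List.getLast?_replicate, if_neg (by omega : ¬(t + 1 - i = 0))]
                  intro hcontra
                  have hax : a = x.1 := by simpa using hcontra
                  exact hhead' x hx hax.symm), mul_zero]
            · -- i > t+1 : the take reaches into L', whose head generator is not a
              exfalso
              have hne' : t + 1 < i := lt_of_le_of_ne hge (fun h => hne h.symm)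
              have hL'ne : L' ≠ [] := by
                intro hnil
                rw [hnil] at hllen
                simp at hllen
                omega
              obtain ⟨y, Y, rfl⟩ := List.exists_cons_of_ne_nil hL'ne
              have hy1 : y.1 ∈ l.take i := by
                have h1 : List.take (t + 2) l = List.replicate (t + 1) a ++ [y.1] := by
                  rw [hl, show t + 2 = (List.replicate (t + 1) a).length + 1 by
                      rw [List.length_replicate], List.take_append]
                  simp
                have h2 : List.take (t + 2) l = List.take (t + 2) (l.take i) := by
                  rw [List.take_take, min_eq_left (by omega)]
                have : y.1 ∈ List.take (t + 2) l := by rw [h1]; simp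
                rw [h2] at this
                exact List.take_subset _ _ this
              have : y.1 = a := hall _ hy1
              exact hhead' y (by simp) this
          · intro hcontra
            exfalso
            apply hcontra
            rw [Finset.mem_range]
            omega

section withF2
variable (f : FreeGroup ℕ →* (NCSeries ℕ)ˣ)
  (hf : ∀ n : ℕ, ((f (FreeGroup.of n) : (NCSeries ℕ)ˣ) : NCSeries ℕ) = 1 + NCSeries.Xvar n)

include hf

lemma magnus_ker (w : FreeGroup ℕ) (hw : f w = 1) : w = 1 := by
  by_contra hne
  have hL : w.toWord ≠ [] := by
    intro h
    apply hne
    have := FreeGroup.mk_toWord (x := w)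
    rw [h] at this
    rw [← this, ← FreeGroup.one_eq_mk]
  have hval : ((f w : (NCSeries ℕ)ˣ) : NCSeries ℕ) = prodS w.toWord := by
    conv_lhs => rw [← FreeGroup.mk_toWord (x := w)]
    exact val_mk f hf _
  rw [hw] at hval
  have hdiag := prodS_diag_ne_zero w.toWord.length w.toWord le_rfl (redWord_toWord w)
  rw [← hval] at hdiag
  apply hdiag
  rw [Units.val_one, one_apply_ofList, if_neg]
  intro h
  exact hL (List.map_eq_nil_iff.1 h)

lemma magnus_inj : Function.Injective f := by
  intro a b h
  have : f (a * b⁻¹) = 1 := by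
    rw [map_mul, map_inv, h, mul_inv_cancel]
  have := magnus_ker f hf _ this
  exact mul_inv_eq_one.1 this

lemma val_coeff_one (w : FreeGroup ℕ) : ((f w : (NCSeries ℕ)ˣ) : NCSeries ℕ) 1 = 1 := by
  have hval : ((f w : (NCSeries ℕ)ˣ) : NCSeries ℕ) = prodS w.toWord := by
    conv_lhs => rw [← FreeGroup.mk_toWord (x := w)]
    exact val_mk f hf _
  rw [hval]
  generalize w.toWord = L
  induction L with
  | nil => rw [prodS_nil, NCSeries.one_apply, if_pos rfl]
  | cons x L ih =>
      rw [prodS_cons, ← ofList_nil_eq_one, mul_apply_ofList] at *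
      rw [show (([] : List ℕ)).length + 1 = 1 from rfl, Finset.sum_range_one]
      simp only [List.take_nil, List.drop_nil]
      rw [ih, mul_one]
      obtain ⟨n, b⟩ := x
      cases b with
      | true => rw [show letterS (n, true) = 1 + NCSeries.Xvar n from rfl, onePlusX_apply]; simp
      | false => rw [show letterS (n, false) = geomS n from rfl, geomS_apply]; simp

end withF2

/-! ### Shortlex order facts -/

lemma shortlex_trans {u v w : FreeMonoid ℕ} (h1 : shortlex (· < ·) u v)
    (h2 : shortlex (· < ·) v w) : shortlex (· < ·) u w := by
  rcases h1 with h1 | ⟨h1e, h1l⟩ <;> rcases h2 with h2 | ⟨h2e, h2l⟩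
  · exact Or.inl (by omega)
  · exact Or.inl (by omega)
  · exact Or.inl (by omega)
  · exact Or.inr ⟨by omega, List.lex_trans (fun a b => lt_trans a b) h1l h2l⟩

lemma shortlex_irrefl (u : FreeMonoid ℕ) : ¬ shortlex (· < ·) u u := by
  rintro (h | ⟨_, h⟩)
  · omega
  · exact List.lex_irrefl (fun x => lt_irrefl x) _ h

lemma shortlex_asymm {u v : FreeMonoid ℕ} (h1 : shortlex (· < ·) u v)
    (h2 : shortlex (· < ·) v u) : False :=
  shortlex_irrefl u (shortlex_trans h1 h2)

lemma toList_injective' : Function.Injective (FreeMonoid.toList : FreeMonoid ℕ → List ℕ) := by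
  intro a b h
  rw [← FreeMonoid.ofList_toList a, ← FreeMonoid.ofList_toList b, h]

lemma shortlex_trichot (u v : FreeMonoid ℕ) :
    shortlex (· < ·) u v ∨ u = v ∨ shortlex (· < ·) v u := by
  rcases lt_trichotomy (FreeMonoid.toList u).length (FreeMonoid.toList v).length with h | h | h
  · exact Or.inl (Or.inl h)
  · rcases trichotomous_of (List.Lex (· < ·)) (FreeMonoid.toList u) (FreeMonoid.toList v)
      with hl | hl | hl
    · exact Or.inl (Or.inr ⟨h, hl⟩)
    · exact Or.inr (Or.inl (toList_injective' hl))
    · exact Or.inr (Or.inr (Or.inr ⟨h.symm, hl⟩))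
  · exact Or.inr (Or.inr (Or.inl h))

lemma lex_min_exists : ∀ (k : ℕ) (S : Set (List ℕ)), (∀ l ∈ S, l.length = k) → S.Nonempty →
    ∃ m ∈ S, ∀ l ∈ S, l ≠ m → List.Lex (· < ·) m l := by
  intro k
  induction k with
  | zero =>
      intro S hlen ⟨l₀, hl₀⟩
      refine ⟨l₀, hl₀, ?_⟩
      intro l hl hne
      exfalso
      apply hne
      have h1 : l = [] := List.eq_nil_of_length_eq_zero (hlen l hl)
      have h2 : l₀ = [] := List.eq_nil_of_length_eq_zero (hlen l₀ hl₀)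
      rw [h1, h2]
  | succ k ih =>
      intro S hlen ⟨l₀, hl₀⟩
      set H : Set ℕ := {h | ∃ t, h :: t ∈ S} with hH
      have hHne : H.Nonempty := by
        obtain ⟨h, t, rfl⟩ := List.exists_cons_of_ne_nil (l := l₀)
          (by intro hnil; have := hlen l₀ hl₀; rw [hnil] at this; simp at this)
        exact ⟨h, t, hl₀⟩
      set h₀ := sInf H with hh₀
      obtain ⟨t₁, ht₁⟩ : ∃ t, h₀ :: t ∈ S := Nat.sInf_mem hHne
      set T : Set (List ℕ) := {t | h₀ :: t ∈ S} with hT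
      have hTlen : ∀ t ∈ T, t.length = k := by
        intro t ht
        have := hlen _ ht
        simpa using this
      obtain ⟨t₀, ht₀, ht₀min⟩ := ih T hTlen ⟨t₁, ht₁⟩
      refine ⟨h₀ :: t₀, ht₀, ?_⟩
      intro l hl hne
      obtain ⟨h, t, rfl⟩ := List.exists_cons_of_ne_nil (l := l)
        (by intro hnil; have := hlen l hl; rw [hnil] at this; simp at this)
      rcases eq_or_ne h h₀ with rfl | hh
      · have htT : t ∈ T := hl
        have : t ≠ t₀ := by intro h; apply hne; rw [h]
        exact List.Lex.cons (ht₀min t htT this)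
      · have : h₀ ≤ h := Nat.sInf_le ⟨t, hl⟩
        exact List.Lex.rel (lt_of_le_of_ne this (Ne.symm hh))

lemma shortlex_min_exists (D : Set (FreeMonoid ℕ)) (hD : D.Nonempty) :
    ∃ m ∈ D, ∀ l ∈ D, l ≠ m → shortlex (· < ·) m l := by
  set K : Set ℕ := {k | ∃ w ∈ D, (FreeMonoid.toList w).length = k} with hK
  have hKne : K.Nonempty := by
    obtain ⟨w, hw⟩ := hD
    exact ⟨_, w, hw, rfl⟩
  set k₀ := sInf K with hk₀
  obtain ⟨w₀, hw₀, hw₀len⟩ : ∃ w ∈ D, (FreeMonoid.toList w).length = k₀ := Nat.sInf_mem hKne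
  set S : Set (List ℕ) := {l | FreeMonoid.ofList l ∈ D ∧ l.length = k₀} with hS
  have hSne : S.Nonempty := ⟨FreeMonoid.toList w₀, by rw [FreeMonoid.ofList_toList]; exact hw₀,
    hw₀len⟩
  obtain ⟨m', ⟨hm'D, hm'len⟩, hm'min⟩ := lex_min_exists k₀ S (fun l hl => hl.2) hSne
  refine ⟨FreeMonoid.ofList m', hm'D, ?_⟩
  intro l hl hne
  have hk₀le : k₀ ≤ (FreeMonoid.toList l).length := Nat.sInf_le ⟨l, hl, rfl⟩
  rcases eq_or_lt_of_le hk₀le with heq | hlt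
  · right
    constructor
    · rw [FreeMonoid.toList_ofList, hm'len, heq]
    · have hlS : FreeMonoid.toList l ∈ S := by
        constructor
        · rw [FreeMonoid.ofList_toList]; exact hl
        · omega
      have hlne : FreeMonoid.toList l ≠ m' := by
        intro h
        apply hne
        rw [← FreeMonoid.ofList_toList l, h]
      rw [FreeMonoid.toList_ofList]
      exact hm'min _ hlS hlne
  · left
    rw [FreeMonoid.toList_ofList, hm'len]
    exact hlt

/-! ### The sandwich lemma for bi-invariance -/

lemma sub_apply' (u v : NCSeries ℕ) (w : FreeMonoid ℕ) : (u - v) w = u w - v w := rfl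

lemma sandwich (u d v : NCSeries ℕ) (m : FreeMonoid ℕ)
    (hd : ∀ q, shortlex (· < ·) q m → d q = 0)
    (l' : List ℕ) (hlen : l'.length ≤ (FreeMonoid.toList m).length) :
    (u * (d * v)) (FreeMonoid.ofList l') = u 1 * (d (FreeMonoid.ofList l') * v 1) := by
  have key1 : ∀ q : List ℕ, q.length < l'.length → d (FreeMonoid.ofList q) = 0 := by
    intro q hq
    apply hd
    left
    rw [FreeMonoid.toList_ofList]
    omega
  have step1 : ∀ i, 1 ≤ i → i ≤ l'.length → (d * v) (FreeMonoid.ofList (l'.drop i)) = 0 := by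
    intro i hi hile
    rw [mul_apply_ofList]
    apply Finset.sum_eq_zero
    intro j hj
    rw [key1 _ (by
      have h1 : ((l'.drop i).take j).length ≤ (l'.drop i).length := by
        rw [List.length_take, List.length_drop]; omega
      rw [List.length_drop] at h1
      omega), zero_mul]
  rw [mul_apply_ofList, Finset.sum_eq_single 0]
  · rw [List.take_zero, List.drop_zero, ofList_nil_eq_one]
    congr 1
    rw [mul_apply_ofList, Finset.sum_eq_single l'.length]
    · rw [List.take_length, List.drop_length, ofList_nil_eq_one]
    · intro j hj hjne
      rw [Finset.mem_range] at hj
      rw [key1 _ (by rw [List.length_take]; omega), zero_mul]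
    · intro h
      exfalso
      exact h (Finset.mem_range.2 (by omega))
  · intro i hi hine
    rw [Finset.mem_range] at hi
    rw [step1 i (by omega) (by omega), mul_zero]
  · intro h
    exfalso
    exact h (Finset.mem_range.2 (by omega))

end MagnusAux

/-- The free group of countably infinite rank is bi-orderable: the Magnus ordering is a
strict total order on `F_∞` invariant under left and right multiplication. -/
theorem freeGroup_magnus_biOrderable (f : FreeGroup ℕ →* (NCSeries ℕ)ˣ)
    (hf : ∀ n : ℕ, ((f (FreeGroup.of n) : (NCSeries ℕ)ˣ) : NCSeries ℕ) = 1 + NCSeries.Xvar n) :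
    IsStrictTotalOrder (FreeGroup ℕ) (magnusLt (· < ·) f) ∧
    ∀ g h x y : FreeGroup ℕ,
      magnusLt (· < ·) f x y → magnusLt (· < ·) f (g * x * h) (g * y * h) := by
  constructor
  · refine { trichotomous := ?_, irrefl := ?_, trans := ?_ }
    · intro a b
      suffices H : magnusLt (· < ·) f a b ∨ a = b ∨ magnusLt (· < ·) f b a from
        fun h1 h2 => (H.resolve_left h1).resolve_right h2
      by_cases hab : a = b
      · exact Or.inr (Or.inl hab)
      · have hval : ((f a : (NCSeries ℕ)ˣ) : NCSeries ℕ) ≠ ((f b : (NCSeries ℕ)ˣ) : NCSeries ℕ) :=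
          fun hv => hab (magnus_inj f hf (Units.ext hv))
        obtain ⟨m, hmD, hmmin⟩ := shortlex_min_exists
          {m | ((f a : (NCSeries ℕ)ˣ) : NCSeries ℕ) m ≠ ((f b : (NCSeries ℕ)ˣ) : NCSeries ℕ) m}
          (Function.ne_iff.1 hval)
        have hminev : ∀ m', shortlex (· < ·) m' m →
            ((f a : (NCSeries ℕ)ˣ) : NCSeries ℕ) m' = ((f b : (NCSeries ℕ)ˣ) : NCSeries ℕ) m' := by
          intro m' hm'
          by_contra hne
          have hne' : m' ≠ m := fun hh => shortlex_irrefl m (hh ▸ hm')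
          exact shortlex_asymm hm' (hmmin m' hne hne')
        rcases lt_or_gt_of_ne hmD with hlt | hgt
        · exact Or.inl ⟨m, hlt, hminev⟩
        · exact Or.inr (Or.inr ⟨m, hgt, fun m' hsl => (hminev m' hsl).symm⟩)
    · rintro a ⟨m, hlt, -⟩
      exact lt_irrefl _ hlt
    · rintro a b c ⟨m1, h1, e1⟩ ⟨m2, h2, e2⟩
      rcases shortlex_trichot m1 m2 with hsl | rfl | hsl
      · exact ⟨m1, lt_of_lt_of_eq h1 (e2 m1 hsl),
          fun m' hm' => (e1 m' hm').trans (e2 m' (shortlex_trans hm' hsl))⟩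
      · exact ⟨m1, h1.trans h2, fun m' hm' => (e1 m' hm').trans (e2 m' hm')⟩
      · exact ⟨m2, lt_of_eq_of_lt (e1 m2 hsl) h2,
          fun m' hm' => (e1 m' (shortlex_trans hm' hsl)).trans (e2 m' hm')⟩
  · intro g h x y hxy
    obtain ⟨m, hlt, heq⟩ := hxy
    have hd : ∀ q, shortlex (· < ·) q m →
        (((f y : (NCSeries ℕ)ˣ) : NCSeries ℕ) - ((f x : (NCSeries ℕ)ˣ) : NCSeries ℕ)) q = 0 := by
      intro q hq
      rw [sub_apply', heq q hq, sub_self]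
    have hkey : ∀ z : FreeGroup ℕ, ((f (g * z * h) : (NCSeries ℕ)ˣ) : NCSeries ℕ)
        = ((f g : (NCSeries ℕ)ˣ) : NCSeries ℕ) *
          (((f z : (NCSeries ℕ)ˣ) : NCSeries ℕ) * ((f h : (NCSeries ℕ)ˣ) : NCSeries ℕ)) := by
      intro z
      rw [map_mul, map_mul, Units.val_mul, Units.val_mul, mul_assoc]
    have hdiff : ∀ w : FreeMonoid ℕ,
        ((f (g * y * h) : (NCSeries ℕ)ˣ) : NCSeries ℕ) w
          - ((f (g * x * h) : (NCSeries ℕ)ˣ) : NCSeries ℕ) w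
        = (((f g : (NCSeries ℕ)ˣ) : NCSeries ℕ) *
            ((((f y : (NCSeries ℕ)ˣ) : NCSeries ℕ) - ((f x : (NCSeries ℕ)ˣ) : NCSeries ℕ)) *
              ((f h : (NCSeries ℕ)ˣ) : NCSeries ℕ))) w := by
      intro w
      rw [← sub_apply', hkey y, hkey x, ← mul_sub, ← sub_mul]
    have hu1 : ((f g : (NCSeries ℕ)ˣ) : NCSeries ℕ) 1 = 1 := val_coeff_one f hf g
    have hv1 : ((f h : (NCSeries ℕ)ˣ) : NCSeries ℕ) 1 = 1 := val_coeff_one f hf h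
    refine ⟨m, ?_, ?_⟩
    · have h1 := sandwich ((f g : (NCSeries ℕ)ˣ) : NCSeries ℕ)
        (((f y : (NCSeries ℕ)ˣ) : NCSeries ℕ) - ((f x : (NCSeries ℕ)ˣ) : NCSeries ℕ))
        ((f h : (NCSeries ℕ)ˣ) : NCSeries ℕ) m hd (FreeMonoid.toList m) le_rfl
      rw [FreeMonoid.ofList_toList] at h1
      have h2 := hdiff m
      rw [h1, hu1, hv1, one_mul, mul_one, sub_apply'] at h2
      have h3 : (0:ℤ) < ((f y : (NCSeries ℕ)ˣ) : NCSeries ℕ) m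
          - ((f x : (NCSeries ℕ)ˣ) : NCSeries ℕ) m := sub_pos.2 hlt
      linarith
    · intro m' hm'
      have hlen : (FreeMonoid.toList m').length ≤ (FreeMonoid.toList m).length := by
        rcases hm' with h' | ⟨h', _⟩
        · omega
        · omega
      have h1 := sandwich ((f g : (NCSeries ℕ)ˣ) : NCSeries ℕ)
        (((f y : (NCSeries ℕ)ˣ) : NCSeries ℕ) - ((f x : (NCSeries ℕ)ˣ) : NCSeries ℕ))
        ((f h : (NCSeries ℕ)ˣ) : NCSeries ℕ) m hd (FreeMonoid.toList m') hlen
      rw [FreeMonoid.ofList_toList] at h1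
      have h2 := hdiff m'
      rw [h1, hd m' hm', zero_mul, mul_zero] at h2
      exact (sub_eq_zero.1 h2).symm
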